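/- Let A be an n×n complex matrix with spectrum {w₁,...,w_k} and let Δ be a positive semidefinite n×n matrix. Then Δ N_{w_i}(A) ⊥ N_{w_j}(A) for all i ≠ j if and only if Δ = Σ_{j=1}^k Δ_j with each Δ_j positive semidefinite and ran Δ_j ⊆ N_{w̄_j}(A*). -/

import Mathlib

open Matrix
open scoped ComplexOrder
/-- The generalized eigenspace (root subspace) of a matrix `M` at `μ`. -/
noncomputable def genEig {n : ℕ} (M : Matrix (Fin n) (Fin n) ℂ) (μ : ℂ) :
    Submodule ℂ (Fin n → ℂ) :=
  ⨆ l : ℕ, LinearMap.ker ((Matrix.toLin' M - μ • (1 : Module.End ℂ (Fin n → ℂ))) ^ l)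

section Aux

variable {n : ℕ}

lemma genEig_eq_max (M : Matrix (Fin n) (Fin n) ℂ) (μ : ℂ) :
    genEig M μ = Module.End.maxGenEigenspace (Matrix.toLin' M) μ := by
  rw [← Module.End.iSup_genEigenspace_eq]
  simp_rw [Module.End.genEigenspace_nat]
  rfl

lemma toLin'_pow_apply (N : Matrix (Fin n) (Fin n) ℂ) (l : ℕ) (x : Fin n → ℂ) :
    ((Matrix.toLin' N) ^ l) x = (N ^ l) *ᵥ x := by
  induction l generalizing x with
  | zero => simp
  | succ l ih =>
      rw [pow_succ, pow_succ, Module.End.mul_apply, Matrix.toLin'_apply, ih,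
        Matrix.mulVec_mulVec]

lemma mem_genEig_iff (M : Matrix (Fin n) (Fin n) ℂ) (μ : ℂ) (x : Fin n → ℂ) :
    x ∈ genEig M μ ↔ ∃ l : ℕ, ((M - μ • 1) ^ l) *ᵥ x = 0 := by
  rw [genEig_eq_max, Module.End.mem_maxGenEigenspace]
  have h : Matrix.toLin' M - μ • (1 : Module.End ℂ (Fin n → ℂ))
      = Matrix.toLin' (M - μ • 1) := by
    rw [map_sub, _root_.map_smul, Matrix.toLin'_one]
    rfl
  simp_rw [h, toLin'_pow_apply]


lemma dot_adjoint (M : Matrix (Fin n) (Fin n) ℂ) (y x : Fin n → ℂ) :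
    star y ⬝ᵥ (M *ᵥ x) = star (Mᴴ *ᵥ y) ⬝ᵥ x := by
  rw [Matrix.dotProduct_mulVec, Matrix.star_mulVec, Matrix.conjTranspose_conjTranspose]

lemma vec_eq_zero_of_forall_dot {v : Fin n → ℂ} (h : ∀ y, star y ⬝ᵥ v = 0) : v = 0 :=
  dotProduct_star_self_eq_zero.mp (h v)

lemma mat_eq_zero_of_forall_mulVec {M : Matrix (Fin n) (Fin n) ℂ}
    (h : ∀ x, M *ᵥ x = 0) : M = 0 := by
  have h2 : Matrix.toLin' M = Matrix.toLin' (0 : Matrix (Fin n) (Fin n) ℂ) := by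
    apply LinearMap.ext
    intro x
    simp [Matrix.toLin'_apply, h x]
  exact Matrix.toLin'.injective h2

lemma conjT_sub_smul (A : Matrix (Fin n) (Fin n) ℂ) (μ : ℂ) :
    (A - μ • 1)ᴴ = Aᴴ - (star μ : ℂ) • 1 := by
  rw [Matrix.conjTranspose_sub, Matrix.conjTranspose_smul, Matrix.conjTranspose_one]

lemma orth_core (A : Matrix (Fin n) (Fin n) ℂ) {μ ν : ℂ} (hμν : μ ≠ ν) :
    ∀ (N p q : ℕ) (y x : Fin n → ℂ), p + q ≤ N →
      ((Aᴴ - (star μ : ℂ) • 1) ^ p) *ᵥ y = 0 → ((A - ν • 1) ^ q) *ᵥ x = 0 →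
      star y ⬝ᵥ x = 0 := by
  intro N
  induction N with
  | zero =>
    intro p q y x hpq hy hx
    obtain ⟨rfl, rfl⟩ : p = 0 ∧ q = 0 := by omega
    rw [pow_zero, Matrix.one_mulVec] at hy
    rw [hy]
    simp
  | succ N ih =>
    intro p q y x hpq hy hx
    match p, q with
    | 0, q =>
      rw [pow_zero, Matrix.one_mulVec] at hy
      rw [hy]; simp
    | p, 0 =>
      rw [pow_zero, Matrix.one_mulVec] at hx
      rw [hx]; simp
    | p+1, q+1 =>
      have h1 : star y ⬝ᵥ ((A - ν • 1) *ᵥ x) = 0 := by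
        apply ih (p+1) q y _ (by omega) hy
        rw [Matrix.mulVec_mulVec, ← pow_succ]
        exact hx
      have h2 : star ((Aᴴ - (star μ : ℂ) • 1) *ᵥ y) ⬝ᵥ x = 0 := by
        apply ih p (q+1) _ x (by omega) _ hx
        rw [Matrix.mulVec_mulVec, ← pow_succ]
        exact hy
      have hsplit : A - μ • 1 = (A - ν • 1) + (ν - μ) • (1 : Matrix (Fin n) (Fin n) ℂ) := by
        rw [sub_smul]; abel
      have key : star ((Aᴴ - (star μ : ℂ) • 1) *ᵥ y) ⬝ᵥ x
          = star y ⬝ᵥ ((A - ν • 1) *ᵥ x) + (ν - μ) * (star y ⬝ᵥ x) := by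
        rw [← conjT_sub_smul, ← dot_adjoint, hsplit, Matrix.add_mulVec,
          Matrix.smul_mulVec, Matrix.one_mulVec, dotProduct_add,
          dotProduct_smul]
        rfl
      rw [h1, h2, zero_add] at key
      have : ν - μ ≠ 0 := sub_ne_zero.mpr (Ne.symm hμν)
      field_simp at key
      exact (mul_eq_zero.mp key.symm).resolve_left this

lemma orth_final (A : Matrix (Fin n) (Fin n) ℂ) {μ ν : ℂ} (hμν : μ ≠ ν) {y x : Fin n → ℂ}
    (hy : y ∈ genEig Aᴴ (star μ)) (hx : x ∈ genEig A ν) : star y ⬝ᵥ x = 0 := by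
  obtain ⟨p, hp⟩ := (mem_genEig_iff _ _ _).mp hy
  obtain ⟨q, hq⟩ := (mem_genEig_iff _ _ _).mp hx
  exact orth_core A hμν (p + q) p q y x le_rfl hp hq

lemma mem_spectrum_of_det {M : Matrix (Fin n) (Fin n) ℂ} {μ : ℂ}
    (h : (M - μ • 1).det = 0) : μ ∈ spectrum ℂ M := by
  rw [spectrum.mem_iff]
  intro hunit
  rw [Algebra.algebraMap_eq_smul_one] at hunit
  have : IsUnit (M - μ • 1) := by
    have := hunit.neg
    rwa [neg_sub] at this
  rw [Matrix.isUnit_iff_isUnit_det, h] at this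
  exact this.ne_zero rfl

lemma det_eq_zero_of_genEig_ne_bot {M : Matrix (Fin n) (Fin n) ℂ} {μ : ℂ}
    (h : genEig M μ ≠ ⊥) : (M - μ • 1).det = 0 := by
  obtain ⟨x, hx, hx0⟩ := Submodule.exists_mem_ne_zero_of_ne_bot h
  obtain ⟨l, hl⟩ := (mem_genEig_iff _ _ _).mp hx
  have := Matrix.exists_mulVec_eq_zero_iff.mp ⟨x, hx0, hl⟩
  rw [Matrix.det_pow] at this
  exact (pow_eq_zero_iff'.mp this).1


lemma iSup_genEig_eq_top {k : ℕ} (M : Matrix (Fin n) (Fin n) ℂ) (w : Fin k → ℂ)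
    (hM : ∀ μ, genEig M μ ≠ ⊥ → μ ∈ Set.range w) :
    ⨆ j, genEig M (w j) = ⊤ := by
  rw [eq_top_iff, ← Module.End.iSup_maxGenEigenspace_eq_top (Matrix.toLin' M)]
  apply iSup_le
  intro μ
  rw [← genEig_eq_max]
  by_cases h : genEig M μ = ⊥
  · rw [h]; exact bot_le
  · obtain ⟨j, rfl⟩ := hM μ h
    exact le_iSup (fun j => genEig M (w j)) j

lemma isInternal_genEig {k : ℕ} (M : Matrix (Fin n) (Fin n) ℂ) (w : Fin k → ℂ)
    (hwinj : Function.Injective w) (hM : ∀ μ, genEig M μ ≠ ⊥ → μ ∈ Set.range w) :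
    DirectSum.IsInternal (fun j : Fin k => genEig M (w j)) := by
  rw [DirectSum.isInternal_submodule_iff_iSupIndep_and_iSup_eq_top]
  refine ⟨?_, iSup_genEig_eq_top M w hM⟩
  have h1 := (Module.End.independent_maxGenEigenspace (Matrix.toLin' M)).comp hwinj
  have h2 : (fun j => genEig M (w j))
      = (Module.End.maxGenEigenspace (Matrix.toLin' M)) ∘ w :=
    funext fun j => genEig_eq_max _ _
  rw [h2]
  exact h1

variable {k : ℕ} {N : Fin k → Submodule ℂ (Fin n → ℂ)}

/-- projection onto `N j` along the rest, for an internal direct sum. -/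
noncomputable def projv (h : DirectSum.IsInternal N) (j : Fin k) :
    (Fin n → ℂ) →ₗ[ℂ] (Fin n → ℂ) :=
  (N j).subtype ∘ₗ DirectSum.component ℂ (Fin k) (fun i => N i) j
    ∘ₗ (LinearEquiv.ofBijective (DirectSum.coeLinearMap N) h).symm.toLinearMap

lemma projv_apply (h : DirectSum.IsInternal N) (j : Fin k) (v : Fin n → ℂ) :
    projv h j v
      = ((LinearEquiv.ofBijective (DirectSum.coeLinearMap N) h).symm v j : Fin n → ℂ) :=
  rfl

lemma projv_mem (h : DirectSum.IsInternal N) (j : Fin k) (v : Fin n → ℂ) :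
    projv h j v ∈ N j := by
  rw [projv_apply]
  exact ((LinearEquiv.ofBijective (DirectSum.coeLinearMap N) h).symm v j).2

lemma projv_eq_zero (h : DirectSum.IsInternal N) {i j : Fin k} (hij : i ≠ j)
    {v : Fin n → ℂ} (hv : v ∈ N i) : projv h j v = 0 := by
  rw [projv_apply, h.ofBijective_coeLinearMap_of_mem_ne hij hv]
  rfl

lemma sum_projv (h : DirectSum.IsInternal N) (v : Fin n → ℂ) :
    ∑ j, projv h j v = v := by
  set e := LinearEquiv.ofBijective (DirectSum.coeLinearMap N) h with he
  have h2 : e.symm v = ∑ j, DirectSum.of (fun i => N i) j ((e.symm v) j) :=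
    (DirectSum.sum_univ_of _).symm
  calc ∑ j, projv h j v
      = ∑ j, DirectSum.coeLinearMap N (DirectSum.of (fun i => N i) j ((e.symm v) j)) := by
        refine Finset.sum_congr rfl fun j _ => ?_
        rw [projv_apply h j v, DirectSum.coeLinearMap_of]
    _ = DirectSum.coeLinearMap N (e.symm v) := by rw [← map_sum, ← h2]
    _ = e (e.symm v) := by rw [he]; rfl
    _ = v := e.apply_symm_apply v


noncomputable def Qm (h : DirectSum.IsInternal N) (j : Fin k) : Matrix (Fin n) (Fin n) ℂ :=
  LinearMap.toMatrix' (projv h j)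

lemma Qm_mulVec (h : DirectSum.IsInternal N) (j : Fin k) (x : Fin n → ℂ) :
    Qm h j *ᵥ x = projv h j x := by
  rw [Qm, ← Matrix.toLin'_apply, Matrix.toLin'_toMatrix']

lemma sum_Qm (h : DirectSum.IsInternal N) : ∑ j, Qm h j = 1 := by
  have h1 : ∑ j, projv h j = LinearMap.id := by
    apply LinearMap.ext
    intro v
    rw [LinearMap.sum_apply]
    exact sum_projv h v
  have : ∑ j, Qm h j = LinearMap.toMatrix' (∑ j, projv h j) := by
    rw [map_sum]
    rfl
  rw [this, h1, LinearMap.toMatrix'_id]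

lemma dotProduct_sum' {m : ℕ} (v : Fin n → ℂ) (f : Fin m → Fin n → ℂ) :
    v ⬝ᵥ (∑ j, f j) = ∑ j, v ⬝ᵥ f j := by
  simp only [dotProduct, Finset.sum_apply, Finset.mul_sum]
  rw [Finset.sum_comm]

lemma sum_dotProduct' {m : ℕ} (v : Fin n → ℂ) (f : Fin m → Fin n → ℂ) :
    (∑ j, f j) ⬝ᵥ v = ∑ j, f j ⬝ᵥ v := by
  simp only [dotProduct, Finset.sum_apply, Finset.sum_mul]
  rw [Finset.sum_comm]

lemma sum_mulVec' {m : ℕ} (M : Fin m → Matrix (Fin n) (Fin n) ℂ) (x : Fin n → ℂ) :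
    (∑ j, M j) *ᵥ x = ∑ j, M j *ᵥ x := by
  ext i
  simp only [Matrix.mulVec, Finset.sum_apply, dotProduct, Finset.sum_mul,
    Matrix.sum_apply]
  rw [Finset.sum_comm]

end Aux

theorem stmt12 {n k : ℕ} (A Δ : Matrix (Fin n) (Fin n) ℂ) (hΔ : Δ.PosSemidef)
    (w : Fin k → ℂ) (hw : Function.Injective w) (hspec : spectrum ℂ A = Set.range w) :
    (∀ i j : Fin k, i ≠ j → ∀ x ∈ genEig A (w i), ∀ y ∈ genEig A (w j),
        dotProduct (star y) (Δ.mulVec x) = 0) ↔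
      ∃ D : Fin k → Matrix (Fin n) (Fin n) ℂ, (∀ j, (D j).PosSemidef) ∧ (Δ = ∑ j, D j) ∧
        ∀ j, ∀ x : Fin n → ℂ, (D j).mulVec x ∈ genEig Aᴴ (starRingEnd ℂ (w j)) := by
  have hNbot : ∀ μ, genEig A μ ≠ ⊥ → μ ∈ Set.range w := fun μ h =>
    hspec ▸ mem_spectrum_of_det (det_eq_zero_of_genEig_ne_bot h)
  have hw' : Function.Injective (fun j => star (w j) : Fin k → ℂ) := by
    intro a b hab
    apply hw
    have := congrArg star hab
    simpa using this
  have hN'bot : ∀ μ, genEig Aᴴ μ ≠ ⊥ → μ ∈ Set.range (fun j => star (w j) : Fin k → ℂ) := by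
    intro μ h
    have hdet := det_eq_zero_of_genEig_ne_bot h
    have h3 := conjT_sub_smul A (star μ)
    rw [star_star] at h3
    rw [← h3, Matrix.det_conjTranspose, star_eq_zero] at hdet
    obtain ⟨j, hj⟩ := hspec ▸ mem_spectrum_of_det hdet
    refine ⟨j, ?_⟩
    show star (w j) = μ
    rw [hj, star_star]
  have hInt : DirectSum.IsInternal (fun j => genEig A (w j)) := isInternal_genEig A w hw hNbot
  have hInt' : DirectSum.IsInternal (fun j => genEig Aᴴ (star (w j))) :=
    isInternal_genEig Aᴴ _ hw' hN'bot
  constructor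
  · intro H
    have hrange : ∀ (j : Fin k) (u : Fin n → ℂ),
        (Qm hInt j)ᴴ *ᵥ u ∈ genEig Aᴴ (star (w j)) := by
      intro j u
      set z := (Qm hInt j)ᴴ *ᵥ u with hzdef
      have hz : z = ∑ l, projv hInt' l z := (sum_projv hInt' z).symm
      have hzero : ∀ l, l ≠ j → projv hInt' l z = 0 := by
        intro l hlj
        have claim : ∀ v, star (projv hInt' l z) ⬝ᵥ v = 0 := by
          intro v
          conv_lhs => rw [← sum_projv hInt v, dotProduct_sum']
          apply Finset.sum_eq_zero
          intro m _
          by_cases hml : m = l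
          · subst hml
            have e2 : star z ⬝ᵥ projv hInt m v = 0 := by
              rw [hzdef, ← dot_adjoint, Qm_mulVec hInt j,
                projv_eq_zero hInt hlj (projv_mem hInt m v), dotProduct_zero]
            have e1 : star z ⬝ᵥ projv hInt m v
                = ∑ l', star (projv hInt' l' z) ⬝ᵥ projv hInt m v := by
              conv_lhs => rw [hz, star_sum, sum_dotProduct']
            rw [Finset.sum_eq_single m ?h1 ?h2] at e1
            · rw [← e1, e2]
            · intro l' _ hl'm
              exact orth_final A (fun h => hl'm (hw h))
                (projv_mem hInt' l' z) (projv_mem hInt m v)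
            · intro habs
              exact absurd (Finset.mem_univ m) habs
          · exact orth_final A (fun h => hml (hw h).symm)
              (projv_mem hInt' l z) (projv_mem hInt m v)
        exact dotProduct_star_self_eq_zero.mp (claim (projv hInt' l z))
      have hzj : z = projv hInt' j z :=
        hz.trans (Finset.sum_eq_single j (fun b _ hb => hzero b hb)
          (fun habs => absurd (Finset.mem_univ j) habs))
      rw [hzj]
      exact projv_mem hInt' j z
    refine ⟨fun j => (Qm hInt j)ᴴ * Δ * Qm hInt j,
      fun j => hΔ.conjTranspose_mul_mul_same _, ?_, ?_⟩
    · -- Δ = sum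
      have hcross : ∀ i j : Fin k, i ≠ j → (Qm hInt i)ᴴ * Δ * Qm hInt j = 0 := by
        intro i j hij
        apply mat_eq_zero_of_forall_mulVec
        intro x
        apply vec_eq_zero_of_forall_dot
        intro y
        rw [← Matrix.mulVec_mulVec, ← Matrix.mulVec_mulVec, dot_adjoint,
          Matrix.conjTranspose_conjTranspose, Qm_mulVec, Qm_mulVec]
        exact H j i (Ne.symm hij) (projv hInt j x) (projv_mem hInt j x)
          (projv hInt i y) (projv_mem hInt i y)
      have h1 : Δ = (∑ l, Qm hInt l)ᴴ * Δ * (∑ m, Qm hInt m) := by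
        rw [sum_Qm hInt]
        simp
      calc Δ = (∑ l, Qm hInt l)ᴴ * Δ * (∑ m, Qm hInt m) := h1
        _ = ∑ l, ((Qm hInt l)ᴴ * Δ * (∑ m, Qm hInt m)) := by
            rw [Matrix.conjTranspose_sum, Finset.sum_mul, Finset.sum_mul]
        _ = ∑ l, ∑ m, (Qm hInt l)ᴴ * Δ * Qm hInt m := by
            exact Finset.sum_congr rfl fun l _ => by rw [Finset.mul_sum]
        _ = ∑ l, (Qm hInt l)ᴴ * Δ * Qm hInt l :=
            Finset.sum_congr rfl fun l _ =>
              Finset.sum_eq_single l (fun m _ hml => hcross l m (Ne.symm hml))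
                (fun habs => absurd (Finset.mem_univ l) habs)
    · -- range condition
      intro j x
      have heq : ((Qm hInt j)ᴴ * Δ * Qm hInt j) *ᵥ x
          = (Qm hInt j)ᴴ *ᵥ (Δ *ᵥ (Qm hInt j *ᵥ x)) := by
        rw [Matrix.mulVec_mulVec, Matrix.mulVec_mulVec, Matrix.mul_assoc]
      rw [heq]
      exact hrange j (Δ *ᵥ (Qm hInt j *ᵥ x))
  · rintro ⟨D, hpsd, hsum, hran⟩ i j hij x hx y hy
    have hsum' : Δ *ᵥ x = ∑ l, D l *ᵥ x := by rw [hsum, sum_mulVec']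
    rw [hsum', dotProduct_sum']
    apply Finset.sum_eq_zero
    intro l _
    have hranl : ∀ v, D l *ᵥ v ∈ genEig Aᴴ (star (w l)) := hran l
    by_cases hlj : l = j
    · subst hlj
      rw [dot_adjoint, (hpsd l).1.eq]
      exact orth_final A (fun h => hij (hw h).symm) (hranl y) hx
    · have h0 : star (D l *ᵥ x) ⬝ᵥ y = 0 :=
        orth_final A (fun h => hlj (hw h)) (hranl x) hy
      have h2 := congrArg star h0
      rwa [Matrix.star_dotProduct, star_star, star_zero] at h2
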